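/- Consider the iteration x_{k+1} := P_D(α_k x_k + (1 − α_k) T(x_k − v_k g_k)) with T, P_D nonexpansive fixing a minimizer x⋆, ‖g_k‖ = 1, g_k ∈ ∂⋆f(x_k), step-sizes with Σ v_k = ∞ and Σ v_k² < ∞, and limsup α_k < 1. If the minimizer set X⋆ over the feasible set has nonempty interior and the iterates stay in Fix(T), then x_k ∈ X⋆ for some finite k. -/

import Mathlib

open Filter Finset

/-- Projection onto a convex set does not increase distance to points of the set. -/
theorem proj_le_aux19 {H : Type*} [NormedAddCommGroup H] [InnerProductSpace ℝ H]
    (D : Set H) (hDconv : Convex ℝ D)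
    (P : H → H) (hP : ∀ z : H, P z ∈ D ∧ ∀ y ∈ D, ‖z - P z‖ ≤ ‖z - y‖)
    (p : H) (hpD : p ∈ D) (z : H) : ‖P z - p‖ ≤ ‖z - p‖ := by
  have hnon : Nonempty D := ⟨⟨p, hpD⟩⟩
  have heq : ‖z - P z‖ = ⨅ w : D, ‖z - w‖ := by
    apply le_antisymm
    · exact le_ciInf fun w => (hP z).2 w w.2
    · exact ciInf_le ⟨0, fun _ ⟨_, h⟩ => h ▸ norm_nonneg _⟩ (⟨P z, (hP z).1⟩ : D)
  have hvar := (norm_eq_iInf_iff_real_inner_le_zero hDconv (hP z).1).mp heq p hpD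
  have hexp : ‖z - p‖ ^ 2
      = ‖z - P z‖ ^ 2 - 2 * (inner ℝ (z - P z) (p - P z) : ℝ) + ‖P z - p‖ ^ 2 := by
    have h1 : z - p = (z - P z) - (p - P z) := by abel
    rw [h1, norm_sub_sq_real]
    congr 2
    rw [← norm_neg]; congr 1; abel
  nlinarith [norm_nonneg (z - p), norm_nonneg (P z - p), norm_nonneg (z - P z)]

/-- Per-step decrease estimate. -/
theorem step_ineq_aux19 {H : Type*} [NormedAddCommGroup H] [InnerProductSpace ℝ H]
    (T : H → H) (hT : ∀ u w : H, ‖T u - T w‖ ≤ ‖u - w‖)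
    (D : Set H) (hDconv : Convex ℝ D)
    (P : H → H) (hP : ∀ z : H, P z ∈ D ∧ ∀ y ∈ D, ‖z - P z‖ ≤ ‖z - y‖)
    (p : H) (hpD : p ∈ D) (hTp : T p = p)
    (u gg : H) (hg : ‖gg‖ = 1) (vk a δ : ℝ) (hvk : 0 < vk) (hδ : 0 < δ)
    (ha : a ∈ Set.Ioc (0:ℝ) 1) (hB : δ / 2 ≤ (inner ℝ gg (u - p) : ℝ)) :
    ‖P (a • u + (1 - a) • T (u - vk • gg)) - p‖ ^ 2
      ≤ ‖u - p‖ ^ 2 - δ * (1 - a) * vk + (1 - a) * vk ^ 2 := by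
  set y := u - vk • gg with hy
  have h1 : ‖y - p‖ ^ 2 = ‖u - p‖ ^ 2 - 2 * vk * (inner ℝ gg (u - p) : ℝ) + vk ^ 2 := by
    have e : y - p = (u - p) - vk • gg := by rw [hy]; abel
    rw [e, norm_sub_sq_real, real_inner_smul_right, norm_smul, real_inner_comm]
    simp [hg, abs_of_pos hvk, mul_pow]
    ring
  have h2 : ‖T y - p‖ ≤ ‖y - p‖ := by
    calc ‖T y - p‖ = ‖T y - T p‖ := by rw [hTp]
    _ ≤ ‖y - p‖ := hT y p
  have h3 : ‖(a • u + (1 - a) • T y) - p‖ ≤ a * ‖u - p‖ + (1 - a) * ‖T y - p‖ := by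
    have e : (a • u + (1 - a) • T y) - p = a • (u - p) + (1 - a) • (T y - p) := by
      module
    rw [e]
    calc ‖a • (u - p) + (1 - a) • (T y - p)‖ ≤ ‖a • (u - p)‖ + ‖(1 - a) • (T y - p)‖ :=
        norm_add_le _ _
      _ = a * ‖u - p‖ + (1 - a) * ‖T y - p‖ := by
        rw [norm_smul, norm_smul, Real.norm_eq_abs, Real.norm_eq_abs,
          abs_of_pos ha.1, abs_of_nonneg (by linarith [ha.2])]
  have h4 : ‖P (a • u + (1 - a) • T y) - p‖ ≤ ‖(a • u + (1 - a) • T y) - p‖ :=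
    proj_le_aux19 D hDconv P hP p hpD _
  have hA := norm_nonneg (P (a • u + (1 - a) • T y) - p)
  have hup := norm_nonneg (u - p)
  have hTy := norm_nonneg (T y - p)
  have hyp := norm_nonneg (y - p)
  have ha1 := ha.1
  have ha2 := ha.2
  have hs1 : ‖P (a • u + (1 - a) • T y) - p‖ ^ 2 ≤ (a * ‖u - p‖ + (1 - a) * ‖T y - p‖) ^ 2 :=
    pow_le_pow_left₀ hA (h4.trans h3) 2
  have hs2 : (a * ‖u - p‖ + (1 - a) * ‖T y - p‖) ^ 2
      ≤ a * ‖u - p‖ ^ 2 + (1 - a) * ‖T y - p‖ ^ 2 := by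
    nlinarith [mul_nonneg (mul_nonneg ha.1.le (by linarith [ha.2] : (0:ℝ) ≤ 1 - a))
      (sq_nonneg (‖u - p‖ - ‖T y - p‖))]
  have hs3 : ‖T y - p‖ ^ 2 ≤ ‖y - p‖ ^ 2 := pow_le_pow_left₀ hTy h2 2
  have hs4 : (1 - a) * vk * (2 * (inner ℝ gg (u - p) : ℝ) - δ) ≥ 0 :=
    mul_nonneg (mul_nonneg (by linarith) hvk.le) (by linarith)
  nlinarith [hs1, hs2, hs3, hs4, h1]

/-- Finite convergence: if the minimizer set over Fix(T) ∩ D has nonempty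
interior and the iterates stay in Fix(T), then some iterate is a minimizer. -/
theorem stmt_19 {H : Type*} [NormedAddCommGroup H] [InnerProductSpace ℝ H]
    (f : H → ℝ) (hcont : Continuous f)
    (hqc : ∀ u w : H, ∀ t : ℝ, t ∈ Set.Icc (0:ℝ) 1 →
      f ((1 - t) • u + t • w) ≤ max (f u) (f w))
    (T : H → H) (hT : ∀ u w : H, ‖T u - T w‖ ≤ ‖u - w‖)
    (D : Set H) (hDc : IsClosed D) (hDconv : Convex ℝ D)
    (P : H → H) (hP : ∀ z : H, P z ∈ D ∧ ∀ y ∈ D, ‖z - P z‖ ≤ ‖z - y‖)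
    (Xstar : Set H)
    (hXstar : Xstar = {z : H | T z = z ∧ z ∈ D ∧ ∀ y : H, T y = y → y ∈ D → f z ≤ f y})
    (hint : (interior Xstar).Nonempty)
    (v : ℕ → ℝ) (hv : ∀ k, 0 < v k)
    (hvsum : Filter.Tendsto (fun n => ∑ i ∈ Finset.range n, v i)
      Filter.atTop Filter.atTop)
    (hvsq : Summable (fun k => v k ^ 2))
    (x : ℕ → H) (g : ℕ → H) (α : ℕ → ℝ)
    (hα : ∀ k, α k ∈ Set.Ioc (0:ℝ) 1)
    (hlimsup : Filter.limsup α Filter.atTop < 1)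
    (hgk : ∀ k, ∀ y : H, f y < f (x k) → (inner ℝ (g k) (y - x k) : ℝ) ≤ 0)
    (hgnorm : ∀ k, ‖g k‖ = 1)
    (hstep : ∀ k, x (k + 1) = P (α k • x k + (1 - α k) • T (x k - v k • g k)))
    (hxfix : ∀ k, T (x k) = x k) :
    ∃ k, x k ∈ Xstar := by
  by_contra hcon
  push_neg at hcon
  obtain ⟨p, hpint⟩ := hint
  obtain ⟨δ, hδpos, hball⟩ := Metric.mem_nhds_iff.mp (mem_interior_iff_mem_nhds.mp hpint)
  have hpX : p ∈ Xstar := interior_subset hpint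
  rw [hXstar] at hpX
  obtain ⟨hTp, hpD, hpmin⟩ := hpX
  -- Claim A : every iterate past 0 has strictly larger f-value than p
  have hA : ∀ m : ℕ, f p < f (x (m + 1)) := by
    intro m
    have hxD : x (m + 1) ∈ D := by rw [hstep m]; exact (hP _).1
    have hnot : x (m + 1) ∉ {z : H | T z = z ∧ z ∈ D ∧
        ∀ y : H, T y = y → y ∈ D → f z ≤ f y} := hXstar ▸ hcon (m + 1)
    simp only [Set.mem_setOf_eq] at hnot
    push_neg at hnot
    obtain ⟨y, hy1, hy2, hy3⟩ := hnot (hxfix _) hxD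
    exact lt_of_le_of_lt (hpmin y hy1 hy2) hy3
  -- Claim B : subgradient inequality with gap δ/2
  have hB : ∀ k, f p < f (x k) → δ / 2 ≤ (inner ℝ (g k) (x k - p) : ℝ) := by
    intro k hk
    set z := p + (δ / 2) • g k with hz
    have hzball : z ∈ Metric.ball p δ := by
      rw [Metric.mem_ball, dist_eq_norm]
      have : z - p = (δ / 2) • g k := by rw [hz]; abel
      rw [this, norm_smul, Real.norm_eq_abs, abs_of_pos (by linarith : (0:ℝ) < δ / 2),
        hgnorm k]
      linarith
    have hzX : z ∈ Xstar := hball hzball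
    rw [hXstar] at hzX
    have hfz : f z ≤ f p := hzX.2.2 p hTp hpD
    have h0 := hgk k z (lt_of_le_of_lt hfz hk)
    have he : z - x k = (δ / 2) • g k - (x k - p) := by rw [hz]; abel
    rw [he, inner_sub_right, real_inner_smul_right] at h0
    have hgg : (inner ℝ (g k) (g k) : ℝ) = 1 := by
      rw [real_inner_self_eq_norm_sq, hgnorm]; norm_num
    rw [hgg] at h0
    linarith
  -- limsup
  have hbdd : IsBoundedUnder (· ≤ ·) atTop α :=
    ⟨1, eventually_map.mpr (Eventually.of_forall fun k => (hα k).2)⟩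
  set L := limsup α atTop with hL
  set β : ℝ := (L + 1) / 2 with hβ
  have hev : ∀ᶠ k in atTop, α k < β :=
    eventually_lt_of_limsup_lt (by rw [hβ]; linarith) hbdd
  obtain ⟨K, hK⟩ := eventually_atTop.mp hev
  have hβ1 : β < 1 := by rw [hβ]; linarith
  set c := δ * (1 - β) with hc
  have hcpos : 0 < c := mul_pos hδpos (by linarith)
  set k₀ := max K 1 with hk₀
  -- per-step for k ≥ k₀
  have hstep2 : ∀ k, k₀ ≤ k → ‖x (k + 1) - p‖ ^ 2 ≤ ‖x k - p‖ ^ 2 - c * v k + v k ^ 2 := by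
    intro k hk
    have hk1 : 1 ≤ k := le_trans (le_max_right K 1) hk
    have hkK : K ≤ k := le_trans (le_max_left K 1) hk
    obtain ⟨m, rfl⟩ : ∃ m, k = m + 1 := ⟨k - 1, by omega⟩
    have hBk := hB (m + 1) (hA m)
    have hmain := step_ineq_aux19 T hT D hDconv P hP p hpD hTp (x (m + 1)) (g (m + 1))
      (hgnorm _) (v (m + 1)) (α (m + 1)) δ (hv _) hδpos (hα _) hBk
    rw [← hstep (m + 1)] at hmain
    have hαβ : α (m + 1) < β := hK _ hkK
    have h1 : c * v (m + 1) ≤ δ * (1 - α (m + 1)) * v (m + 1) := by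
      apply mul_le_mul_of_nonneg_right _ (hv _).le
      rw [hc]; exact mul_le_mul_of_nonneg_left (by linarith) hδpos.le
    have h2 : (1 - α (m + 1)) * v (m + 1) ^ 2 ≤ v (m + 1) ^ 2 := by
      nlinarith [(hα (m + 1)).1, sq_nonneg (v (m + 1))]
    linarith
  -- telescoping
  have htel : ∀ n : ℕ, ‖x (k₀ + n) - p‖ ^ 2
      ≤ ‖x k₀ - p‖ ^ 2 - c * ∑ i ∈ range n, v (k₀ + i) + ∑ i ∈ range n, v (k₀ + i) ^ 2 := by
    intro n
    induction n with
    | zero => simp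
    | succ n ih =>
      have hs := hstep2 (k₀ + n) (Nat.le_add_right _ _)
      have he : k₀ + (n + 1) = (k₀ + n) + 1 := by omega
      rw [he, Finset.sum_range_succ, Finset.sum_range_succ]
      linarith
  -- bounds on the sums
  set S := ∑' k, v k ^ 2 with hS
  have hSsum : ∀ n : ℕ, ∑ i ∈ range n, v (k₀ + i) ^ 2 ≤ S := by
    intro n
    calc ∑ i ∈ range n, v (k₀ + i) ^ 2 = ∑ j ∈ Finset.Ico k₀ (k₀ + n), v j ^ 2 := by
          rw [Finset.sum_Ico_eq_sum_range]; simp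
      _ ≤ ∑ j ∈ range (k₀ + n), v j ^ 2 := by
          apply Finset.sum_le_sum_of_subset_of_nonneg
          · intro i hi
            simp only [Finset.mem_Ico] at hi
            simp only [Finset.mem_range]
            omega
          · intro i _ _; exact sq_nonneg _
      _ ≤ S := Summable.sum_le_tsum _ (fun i _ => sq_nonneg _) hvsq
  have hVsum : ∀ n : ℕ, ∑ i ∈ range n, v (k₀ + i)
      = (∑ j ∈ range (k₀ + n), v j) - ∑ j ∈ range k₀, v j := by
    intro n
    rw [← Finset.sum_Ico_eq_sub _ (Nat.le_add_right _ _), Finset.sum_Ico_eq_sum_range]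
    simp
  -- choose a far enough index
  set b := ‖x k₀ - p‖ ^ 2 with hb
  obtain ⟨m, hm1, hm2⟩ := ((tendsto_atTop.mp hvsum
    ((b + S) / c + (∑ j ∈ range k₀, v j) + 1)).and (eventually_ge_atTop k₀)).exists
  set n := m - k₀ with hn
  have hmn : k₀ + n = m := by omega
  have hsum_lb : (b + S) / c + 1 ≤ ∑ i ∈ range n, v (k₀ + i) := by
    rw [hVsum n, hmn]
    linarith
  have hc_mul : c * ((b + S) / c + 1) = b + S + c := by
    field_simp
  have hfinal := htel n
  have h0 : (0:ℝ) ≤ ‖x (k₀ + n) - p‖ ^ 2 := sq_nonneg _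
  have hge : c * ((b + S) / c + 1) ≤ c * ∑ i ∈ range n, v (k₀ + i) :=
    mul_le_mul_of_nonneg_left hsum_lb hcpos.le
  have := hSsum n
  rw [hc_mul] at hge
  linarith
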